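/- Let P be a countable LCM monoid and let T : P → B(H) be the family of truncated shift operators on H = ℓ²(Δ), i.e. bounded operators satisfying T_p δ_{(a,x)} = δ_{(a,px)} whenever (a,px) ∈ Δ and T_p δ_{(a,x)} = 0 otherwise. Then the closure of the linear span of {T_p ∘ (T_q)* ∘ T_r : p, q, r ∈ P, q ∈ Pp ∩ rP} equals the closed *-subalgebra of B(H) generated by {T_p : p ∈ P} (the C*-algebra C*_{ts}(P, P^{op})). -/

import Mathlib

/-- The principal right ideal `pP = {pq : q ∈ P}`. -/
def rIdeal (P : Type*) [Monoid P] (p : P) : Set P := {y | ∃ x, y = p * x}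

/-- The principal left ideal `Pp = {qp : q ∈ P}`. -/
def lIdeal (P : Type*) [Monoid P] (p : P) : Set P := {y | ∃ x, y = x * p}

/-- `Δ_p = {(bpx, px) : b, x ∈ P}`. -/
def DeltaLow (P : Type*) [Monoid P] (p : P) : Set (P × P) :=
  {γ | ∃ b x : P, γ = (b * p * x, p * x)}

/-- `Δ^p = {(bpx, x) : b, x ∈ P}`. -/
def DeltaHigh (P : Type*) [Monoid P] (p : P) : Set (P × P) :=
  {γ | ∃ b x : P, γ = (b * p * x, x)}

/-- `P` is an LCM monoid (given it is cancellative): the intersection of two principal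
right ideals is empty or principal, and likewise for principal left ideals. -/
def IsLCMMonoid (P : Type*) [Monoid P] : Prop :=
  (∀ p q : P, rIdeal P p ∩ rIdeal P q = ∅ ∨ ∃ r, rIdeal P p ∩ rIdeal P q = rIdeal P r) ∧
  (∀ p q : P, lIdeal P p ∩ lIdeal P q = ∅ ∨ ∃ r, lIdeal P p ∩ lIdeal P q = lIdeal P r)

/-- `Y_p = {(bpx, px) : (bpx, x) ∈ Y}`. -/
def subOp (P : Type*) [Monoid P] (Y : Set (P × P)) (p : P) : Set (P × P) :=
  {γ | ∃ b x : P, (b * p * x, x) ∈ Y ∧ γ = (b * p * x, p * x)}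

/-- `Y^p = {(bpx, x) : (bpx, px) ∈ Y}`. -/
def supOp (P : Type*) [Monoid P] (Y : Set (P × P)) (p : P) : Set (P × P) :=
  {γ | ∃ b x : P, (b * p * x, p * x) ∈ Y ∧ γ = (b * p * x, x)}

/-- `Δ = {(bx, x) : b, x ∈ P}`. -/
def Delta (P : Type*) [Monoid P] : Set (P × P) := {γ | ∃ b x : P, γ = (b * x, x)}

/-- The standard orthonormal basis vector `δ_γ` of `ℓ²(Δ)`. -/
noncomputable def deltaBasis (P : Type*) [Monoid P] (γ : Delta P) :
    lp (fun _ : Delta P => ℂ) 2 :=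
  letI := Classical.decEq (Delta P)
  lp.single 2 γ 1

/-- `T : P → B(ℓ²(Δ))` is the family of truncated shift operators:
`T_p δ_{(a,x)} = δ_{(a,px)}` whenever `(a,px) ∈ Δ`, and `T_p δ_{(a,x)} = 0` otherwise. -/
def IsTruncShift (P : Type*) [Monoid P]
    (T : P → (lp (fun _ : Delta P => ℂ) 2 →L[ℂ] lp (fun _ : Delta P => ℂ) 2)) : Prop :=
  ∀ (p : P) (γ : Delta P),
    (∀ h : ((γ : P × P).1, p * (γ : P × P).2) ∈ Delta P,
      T p (deltaBasis P γ) = deltaBasis P ⟨((γ : P × P).1, p * (γ : P × P).2), h⟩) ∧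
    (((γ : P × P).1, p * (γ : P × P).2) ∉ Delta P → T p (deltaBasis P γ) = 0)

section Aux

variable {P : Type*} [CancelMonoid P]

theorem mem_Delta {a x : P} : (a, x) ∈ Delta P ↔ ∃ b, a = b * x := by
  constructor
  · rintro ⟨b, x', h⟩
    rw [Prod.mk.injEq] at h
    exact ⟨b, by rw [h.1, h.2]⟩
  · rintro ⟨b, rfl⟩; exact ⟨b, x, rfl⟩

theorem mem_Delta_of_eq {a m : P} (h : (a, m) ∈ Delta P) {s n : P} (hm : m = s * n) :
    (a, n) ∈ Delta P := by
  obtain ⟨b, hb⟩ := mem_Delta.1 h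
  exact mem_Delta.2 ⟨b * s, by rw [hb, hm, mul_assoc]⟩

theorem deltaBasis_apply_self (γ : Delta P) :
    (deltaBasis P γ : ∀ _ : Delta P, ℂ) γ = 1 := by
  letI : DecidableEq (Delta P) := Classical.decEq _
  unfold deltaBasis
  exact lp.single_apply_self _ _ _

theorem deltaBasis_apply_ne {γ γ' : Delta P} (h : γ' ≠ γ) :
    (deltaBasis P γ : ∀ _ : Delta P, ℂ) γ' = 0 := by
  letI : DecidableEq (Delta P) := Classical.decEq _
  unfold deltaBasis
  exact lp.single_apply_ne _ _ _ h

theorem deltaBasis_congr {u u' : P × P} (h : u = u') (hu : u ∈ Delta P) (hu' : u' ∈ Delta P) :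
    deltaBasis P ⟨u, hu⟩ = deltaBasis P ⟨u', hu'⟩ := by subst h; rfl

theorem inner_deltaBasis_left (γ : Delta P) (v : lp (fun _ : Delta P => ℂ) 2) :
    (inner ℂ (deltaBasis P γ) v : ℂ) = v γ := by
  letI : DecidableEq (Delta P) := Classical.decEq _
  unfold deltaBasis
  rw [lp.inner_single_left]
  simp [RCLike.inner_apply]

theorem lp2_ext {v w : lp (fun _ : Delta P => ℂ) 2} (h : ∀ γ, v γ = w γ) : v = w :=
  lp.ext (funext h)

theorem clm_ext_deltaBasis
    {S S' : lp (fun _ : Delta P => ℂ) 2 →L[ℂ] lp (fun _ : Delta P => ℂ) 2}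
    (h : ∀ γ, S (deltaBasis P γ) = S' (deltaBasis P γ)) : S = S' := by
  letI : DecidableEq (Delta P) := Classical.decEq _
  refine ContinuousLinearMap.ext fun f => ?_
  have hs : HasSum (fun γ : Delta P => lp.single 2 γ (f γ)) f :=
    lp.hasSum_single ENNReal.ofNat_ne_top f
  have key : ∀ L : lp (fun _ : Delta P => ℂ) 2 →L[ℂ] lp (fun _ : Delta P => ℂ) 2,
      HasSum (fun γ : Delta P => L (lp.single 2 γ (f γ))) (L f) := fun L => hs.mapL L
  have e : ∀ (L : lp (fun _ : Delta P => ℂ) 2 →L[ℂ] lp (fun _ : Delta P => ℂ) 2) γ,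
      L (lp.single 2 γ (f γ)) = f γ • L (deltaBasis P γ) := by
    intro L γ
    have h1 : lp.single 2 γ (f γ) = (f γ) • deltaBasis P γ := by
      unfold deltaBasis
      rw [← lp.single_smul, smul_eq_mul, mul_one]
    rw [h1, map_smul]
  refine (key S).unique ?_
  have h2 := key S'
  have h3 : (fun γ : Delta P => S' (lp.single 2 γ (f γ)))
      = fun γ : Delta P => S (lp.single 2 γ (f γ)) := by
    funext γ; rw [e S, e S', h]
  rwa [h3] at h2

end Aux

/-- `S` acts like the shift sending `δ_{(a, t y)} ↦ δ_{(a, p y)}` when `(a, q y) ∈ Δ`,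
and killing all other basis vectors. -/
def ShiftsLike {P : Type*} [Monoid P] (t p q : P)
    (S : lp (fun _ : Delta P => ℂ) 2 →L[ℂ] lp (fun _ : Delta P => ℂ) 2) : Prop :=
  ∀ (a x : P) (hγ : (a, x) ∈ Delta P),
    (∀ y : P, x = t * y → (a, q * y) ∈ Delta P →
      ∀ h : (a, p * y) ∈ Delta P,
        S (deltaBasis P ⟨(a, x), hγ⟩) = deltaBasis P ⟨(a, p * y), h⟩) ∧
    ((¬ ∃ y : P, x = t * y ∧ (a, q * y) ∈ Delta P) →
      S (deltaBasis P ⟨(a, x), hγ⟩) = 0)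

section Aux2

variable {P : Type*} [CancelMonoid P]

theorem shiftsLike_unique {t p q : P} (hqp : ∃ s, q = s * p)
    {S S' : lp (fun _ : Delta P => ℂ) 2 →L[ℂ] lp (fun _ : Delta P => ℂ) 2}
    (h1 : ShiftsLike t p q S) (h2 : ShiftsLike t p q S') : S = S' := by
  obtain ⟨s, hs⟩ := hqp
  apply clm_ext_deltaBasis
  rintro ⟨⟨a, x⟩, hγ⟩
  by_cases hx : ∃ y : P, x = t * y ∧ (a, q * y) ∈ Delta P
  · obtain ⟨y, hy, hq⟩ := hx
    have hpΔ : (a, p * y) ∈ Delta P := mem_Delta_of_eq hq (by rw [hs, mul_assoc])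
    rw [(h1 a x hγ).1 y hy hq hpΔ, (h2 a x hγ).1 y hy hq hpΔ]
  · rw [(h1 a x hγ).2 hx, (h2 a x hγ).2 hx]

theorem truncShift_shiftsLike
    {T : P → (lp (fun _ : Delta P => ℂ) 2 →L[ℂ] lp (fun _ : Delta P => ℂ) 2)}
    (hT : IsTruncShift P T) (p : P) : ShiftsLike 1 p p (T p) := by
  intro a x hγ
  constructor
  · intro y hy hq h
    rw [one_mul] at hy; subst hy
    exact (hT p ⟨(a, x), hγ⟩).1 h
  · intro hn
    apply (hT p ⟨(a, x), hγ⟩).2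
    intro hmem
    exact hn ⟨x, (one_mul x).symm, hmem⟩

theorem one_shiftsLike :
    ShiftsLike (1 : P) 1 1
      (1 : lp (fun _ : Delta P => ℂ) 2 →L[ℂ] lp (fun _ : Delta P => ℂ) 2) := by
  intro a x hγ
  constructor
  · intro y hy _ h
    rw [one_mul] at hy; subst hy
    rw [ContinuousLinearMap.one_apply]
    exact deltaBasis_congr (by rw [one_mul]) hγ h
  · intro hn
    exact absurd ⟨x, (one_mul x).symm, by rw [one_mul]; exact hγ⟩ hn

theorem shiftsLike_adjoint {t p q : P}
    {S : lp (fun _ : Delta P => ℂ) 2 →L[ℂ] lp (fun _ : Delta P => ℂ) 2}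
    (hqp : ∃ s, q = s * p) (h : ShiftsLike t p q S) :
    ShiftsLike p t q (ContinuousLinearMap.adjoint S) := by
  obtain ⟨s, hs⟩ := hqp
  have coordL : ∀ (γ γ' : Delta P),
      ((ContinuousLinearMap.adjoint S) (deltaBasis P γ) : ∀ _ : Delta P, ℂ) γ'
        = (inner ℂ (S (deltaBasis P γ')) (deltaBasis P γ) : ℂ) := by
    intro γ γ'
    rw [← ContinuousLinearMap.adjoint_inner_right, inner_deltaBasis_left]
  intro a x hγ
  constructor
  · intro y hy hq hΔ
    apply lp2_ext
    rintro ⟨⟨c, z⟩, hγ'⟩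
    rw [coordL]
    by_cases hz : ∃ w : P, z = t * w ∧ (c, q * w) ∈ Delta P
    · obtain ⟨w, hw, hcq⟩ := hz
      have hcp : (c, p * w) ∈ Delta P := mem_Delta_of_eq hcq (by rw [hs, mul_assoc])
      rw [(h c z hγ').1 w hw hcq hcp, inner_deltaBasis_left]
      by_cases he : (⟨(c, p * w), hcp⟩ : Delta P) = ⟨(a, x), hγ⟩
      · have he' : c = a ∧ p * w = x := by
          have := Subtype.ext_iff.1 he
          exact Prod.mk.injEq .. ▸ this
        have hwy : w = y := mul_left_cancel (by rw [he'.2, hy])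
        have he2 : (⟨(c, z), hγ'⟩ : Delta P) = ⟨(a, t * y), hΔ⟩ := by
          apply Subtype.ext
          simp only
          rw [he'.1, hw, hwy]
        rw [he, he2, deltaBasis_apply_self, deltaBasis_apply_self]
      · have hne2 : (⟨(c, z), hγ'⟩ : Delta P) ≠ ⟨(a, t * y), hΔ⟩ := by
          intro he2
          apply he
          have he2' : c = a ∧ z = t * y := by
            have := Subtype.ext_iff.1 he2
            exact Prod.mk.injEq .. ▸ this
          have hwy : w = y := mul_left_cancel (by rw [← hw, he2'.2])
          apply Subtype.ext
          simp only
          rw [he2'.1, hwy, ← hy]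
        rw [deltaBasis_apply_ne he, deltaBasis_apply_ne hne2]
    · rw [(h c z hγ').2 hz, inner_zero_left]
      have hne2 : (⟨(c, z), hγ'⟩ : Delta P) ≠ ⟨(a, t * y), hΔ⟩ := by
        intro he2
        apply hz
        have he2' : c = a ∧ z = t * y := by
          have := Subtype.ext_iff.1 he2
          exact Prod.mk.injEq .. ▸ this
        exact ⟨y, he2'.2, he2'.1 ▸ hq⟩
      rw [deltaBasis_apply_ne hne2]
  · intro hn
    apply lp2_ext
    rintro ⟨⟨c, z⟩, hγ'⟩
    rw [coordL]
    have hz0 : ((0 : lp (fun _ : Delta P => ℂ) 2) : ∀ _ : Delta P, ℂ) = 0 := lp.coeFn_zero _ _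
    rw [hz0]
    simp only [Pi.zero_apply]
    by_cases hz : ∃ w : P, z = t * w ∧ (c, q * w) ∈ Delta P
    · obtain ⟨w, hw, hcq⟩ := hz
      have hcp : (c, p * w) ∈ Delta P := mem_Delta_of_eq hcq (by rw [hs, mul_assoc])
      rw [(h c z hγ').1 w hw hcq hcp, inner_deltaBasis_left]
      have hne : (⟨(c, p * w), hcp⟩ : Delta P) ≠ ⟨(a, x), hγ⟩ := by
        intro he
        have he' : c = a ∧ p * w = x := by
          have := Subtype.ext_iff.1 he
          exact Prod.mk.injEq .. ▸ this
        exact hn ⟨w, he'.2.symm, he'.1 ▸ hcq⟩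
      rw [deltaBasis_apply_ne hne]
    · rw [(h c z hγ').2 hz, inner_zero_left]

end Aux2

section Aux3

variable {P : Type*} [CancelMonoid P]

theorem generator_shiftsLike
    {T : P → (lp (fun _ : Delta P => ℂ) 2 →L[ℂ] lp (fun _ : Delta P => ℂ) 2)}
    (hT : IsTruncShift P T) (p q r s t : P) (hs : q = s * p) (ht : q = r * t) :
    ShiftsLike t p q ((T p).comp ((ContinuousLinearMap.adjoint (T q)).comp (T r))) := by
  have hTr := truncShift_shiftsLike hT r
  have hTp := truncShift_shiftsLike hT p
  have hTqa : ShiftsLike q 1 q (ContinuousLinearMap.adjoint (T q)) :=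
    shiftsLike_adjoint ⟨1, (one_mul q).symm⟩ (truncShift_shiftsLike hT q)
  intro a x hγ
  rw [ContinuousLinearMap.comp_apply, ContinuousLinearMap.comp_apply]
  constructor
  · intro y hy hq hΔ
    have hrx : r * x = q * y := by rw [hy, ← mul_assoc, ← ht]
    have hrΔ : (a, r * x) ∈ Delta P := by rw [hrx]; exact hq
    rw [(hTr a x hγ).1 x (one_mul x).symm hrΔ hrΔ]
    have h1y : (a, 1 * y) ∈ Delta P := mem_Delta_of_eq (s := q) hq (by rw [one_mul])
    rw [(hTqa a (r * x) hrΔ).1 y hrx hq h1y]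
    exact (hTp a (1 * y) h1y).1 y rfl hΔ hΔ
  · intro hn
    by_cases hr : (a, r * x) ∈ Delta P
    · rw [(hTr a x hγ).1 x (one_mul x).symm hr hr]
      rw [(hTqa a (r * x) hr).2 ?_, map_zero]
      rintro ⟨w, hw, hqw⟩
      refine hn ⟨w, ?_, hqw⟩
      apply mul_left_cancel (a := r)
      rw [hw, ht, mul_assoc]
    · rw [(hTr a x hγ).2 ?_, map_zero, map_zero]
      rintro ⟨w, hw, hrw⟩
      rw [one_mul] at hw; subst hw
      exact hr hrw

theorem shiftsLike_mul (hP : IsLCMMonoid P) {t1 p1 q1 t2 p2 q2 : P}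
    {S1 S2 : lp (fun _ : Delta P => ℂ) 2 →L[ℂ] lp (fun _ : Delta P => ℂ) 2}
    (hq1p : ∃ s, q1 = s * p1) (hq1t : ∃ r, q1 = r * t1)
    (hq2p : ∃ s, q2 = s * p2) (hq2t : ∃ r, q2 = r * t2)
    (h1 : ShiftsLike t1 p1 q1 S1) (h2 : ShiftsLike t2 p2 q2 S2) :
    S1.comp S2 = 0 ∨ ∃ t p q : P, (∃ s, q = s * p) ∧ (∃ r, q = r * t) ∧
      ShiftsLike t p q (S1.comp S2) := by
  obtain ⟨s1, hs1⟩ := hq1p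
  obtain ⟨r1, hr1⟩ := hq1t
  obtain ⟨s2, hs2⟩ := hq2p
  obtain ⟨r2, hr2⟩ := hq2t
  rcases hP.1 p2 t1 with hemp | ⟨w, hw⟩
  · left
    apply clm_ext_deltaBasis
    rintro ⟨⟨a, x⟩, hγ⟩
    rw [ContinuousLinearMap.comp_apply, ContinuousLinearMap.zero_apply]
    by_cases h2x : ∃ y : P, x = t2 * y ∧ (a, q2 * y) ∈ Delta P
    · obtain ⟨y, hxy, hq2Δ⟩ := h2x
      have hp2Δ : (a, p2 * y) ∈ Delta P := mem_Delta_of_eq hq2Δ (by rw [hs2, mul_assoc])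
      rw [(h2 a x hγ).1 y hxy hq2Δ hp2Δ]
      apply (h1 a (p2 * y) hp2Δ).2
      rintro ⟨z, hz, -⟩
      have hmem : p2 * y ∈ rIdeal P p2 ∩ rIdeal P t1 := ⟨⟨y, rfl⟩, ⟨z, hz⟩⟩
      rw [hemp] at hmem
      exact hmem
    · rw [(h2 a x hγ).2 h2x, map_zero]
  · have hwmem : w ∈ rIdeal P p2 ∩ rIdeal P t1 := by rw [hw]; exact ⟨1, (mul_one w).symm⟩
    obtain ⟨⟨y0, hy0⟩, ⟨z0, hz0⟩⟩ := hwmem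
    rcases hP.2 (q2 * y0) (q1 * z0) with hemp' | ⟨w', hw'⟩
    · left
      apply clm_ext_deltaBasis
      rintro ⟨⟨a, x⟩, hγ⟩
      rw [ContinuousLinearMap.comp_apply, ContinuousLinearMap.zero_apply]
      by_cases h2x : ∃ y : P, x = t2 * y ∧ (a, q2 * y) ∈ Delta P
      · obtain ⟨y, hxy, hq2Δ⟩ := h2x
        have hp2Δ : (a, p2 * y) ∈ Delta P := mem_Delta_of_eq hq2Δ (by rw [hs2, mul_assoc])
        rw [(h2 a x hγ).1 y hxy hq2Δ hp2Δ]
        apply (h1 a (p2 * y) hp2Δ).2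
        rintro ⟨z, hz, hq1Δ⟩
        have hyw : p2 * y ∈ rIdeal P w := by rw [← hw]; exact ⟨⟨y, rfl⟩, ⟨z, hz⟩⟩
        obtain ⟨c, hc⟩ := hyw
        have hyc : y = y0 * c :=
          mul_left_cancel (a := p2) (show p2 * y = p2 * (y0 * c) by rw [hc, hy0, mul_assoc])
        have hzc : z = z0 * c :=
          mul_left_cancel (a := t1) (show t1 * z = t1 * (z0 * c) by
            rw [← hz, hc, hz0, mul_assoc])
        obtain ⟨b, hb⟩ := mem_Delta.1 hq2Δ
        obtain ⟨b', hb'⟩ := mem_Delta.1 hq1Δ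
        have e1 : b * (q2 * y0) * c = a := by rw [hb, hyc, mul_assoc, mul_assoc]
        have e2 : b' * (q1 * z0) * c = a := by rw [hb', hzc, mul_assoc, mul_assoc]
        have hm : b * (q2 * y0) = b' * (q1 * z0) := mul_right_cancel (e1.trans e2.symm)
        have hmem : b * (q2 * y0) ∈ lIdeal P (q2 * y0) ∩ lIdeal P (q1 * z0) :=
          ⟨⟨b, rfl⟩, ⟨b', hm⟩⟩
        rw [hemp'] at hmem
        exact hmem
      · rw [(h2 a x hγ).2 h2x, map_zero]
    · right
      have hw'mem : w' ∈ lIdeal P (q2 * y0) ∩ lIdeal P (q1 * z0) := by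
        rw [hw']; exact ⟨1, (one_mul w').symm⟩
      obtain ⟨⟨u, hu⟩, ⟨v, hv⟩⟩ := hw'mem
      refine ⟨t2 * y0, p1 * z0, w', ⟨v * s1, by rw [hv, hs1, mul_assoc, mul_assoc]⟩,
        ⟨u * r2, by rw [hu, hr2, mul_assoc, mul_assoc]⟩, ?_⟩
      intro a x hγ
      rw [ContinuousLinearMap.comp_apply]
      constructor
      · intro y' hx hqΔ hpΔ
        have hq2Δ : (a, q2 * (y0 * y')) ∈ Delta P :=
          mem_Delta_of_eq hqΔ (by rw [hu, mul_assoc, mul_assoc])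
        have hp2Δ : (a, p2 * (y0 * y')) ∈ Delta P :=
          mem_Delta_of_eq hq2Δ (by rw [hs2, mul_assoc])
        rw [(h2 a x hγ).1 (y0 * y') (by rw [hx, mul_assoc]) hq2Δ hp2Δ]
        have hkey : p2 * (y0 * y') = t1 * (z0 * y') := by
          rw [← mul_assoc, ← hy0, hz0, mul_assoc]
        have hq1Δ : (a, q1 * (z0 * y')) ∈ Delta P :=
          mem_Delta_of_eq hqΔ (by rw [hv, mul_assoc, mul_assoc])
        have hp1Δ : (a, p1 * (z0 * y')) ∈ Delta P := by rw [← mul_assoc]; exact hpΔ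
        rw [(h1 a (p2 * (y0 * y')) hp2Δ).1 (z0 * y') hkey hq1Δ hp1Δ]
        exact deltaBasis_congr (by rw [mul_assoc]) hp1Δ hpΔ
      · intro hn
        by_cases h2x : ∃ y : P, x = t2 * y ∧ (a, q2 * y) ∈ Delta P
        · obtain ⟨y, hxy, hq2Δ⟩ := h2x
          have hp2Δ : (a, p2 * y) ∈ Delta P := mem_Delta_of_eq hq2Δ (by rw [hs2, mul_assoc])
          rw [(h2 a x hγ).1 y hxy hq2Δ hp2Δ]
          apply (h1 a (p2 * y) hp2Δ).2
          rintro ⟨z, hz, hq1Δ⟩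
          have hyw : p2 * y ∈ rIdeal P w := by rw [← hw]; exact ⟨⟨y, rfl⟩, ⟨z, hz⟩⟩
          obtain ⟨c, hc⟩ := hyw
          have hyc : y = y0 * c :=
            mul_left_cancel (a := p2) (show p2 * y = p2 * (y0 * c) by rw [hc, hy0, mul_assoc])
          have hzc : z = z0 * c :=
            mul_left_cancel (a := t1) (show t1 * z = t1 * (z0 * c) by
              rw [← hz, hc, hz0, mul_assoc])
          obtain ⟨b, hb⟩ := mem_Delta.1 hq2Δ
          obtain ⟨b', hb'⟩ := mem_Delta.1 hq1Δ
          have e1 : b * (q2 * y0) * c = a := by rw [hb, hyc, mul_assoc, mul_assoc]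
          have e2 : b' * (q1 * z0) * c = a := by rw [hb', hzc, mul_assoc, mul_assoc]
          have hm : b * (q2 * y0) = b' * (q1 * z0) := mul_right_cancel (e1.trans e2.symm)
          have hmem : b * (q2 * y0) ∈ lIdeal P w' := by
            rw [← hw']; exact ⟨⟨b, rfl⟩, ⟨b', hm⟩⟩
          obtain ⟨d, hd⟩ := hmem
          apply hn
          refine ⟨c, by rw [hxy, hyc, mul_assoc], ?_⟩
          exact mem_Delta.2 ⟨d, by rw [← e1, hd, mul_assoc]⟩
        · rw [(h2 a x hγ).2 h2x, map_zero]

end Aux3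

section Aux4

variable {P : Type*} [CancelMonoid P]

theorem shiftsLike_mem_gen
    {T : P → (lp (fun _ : Delta P => ℂ) 2 →L[ℂ] lp (fun _ : Delta P => ℂ) 2)}
    (hT : IsTruncShift P T) {t p q : P} (hqp : ∃ s, q = s * p) (hqt : ∃ r, q = r * t)
    {S : lp (fun _ : Delta P => ℂ) 2 →L[ℂ] lp (fun _ : Delta P => ℂ) 2}
    (hS : ShiftsLike t p q S) :
    S ∈ {S | ∃ p q r : P, q ∈ lIdeal P p ∩ rIdeal P r ∧
      S = (T p).comp ((ContinuousLinearMap.adjoint (T q)).comp (T r))} := by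
  obtain ⟨r, hr⟩ := hqt
  obtain ⟨s, hs⟩ := hqp
  exact ⟨p, q, r, ⟨⟨s, hs⟩, ⟨t, hr⟩⟩,
    shiftsLike_unique ⟨s, hs⟩ hS (generator_shiftsLike hT p q r s t hs hr)⟩

end Aux4


/-- For a countable LCM monoid `P`, the closed linear span of
`{T_p (T_q)* T_r : q ∈ Pp ∩ rP}` equals the closed *-subalgebra of `B(ℓ²(Δ))` generated
by the truncated shifts `{T_p : p ∈ P}`, i.e. the C*-algebra `C*_ts(P, P^op)`. -/
theorem span_TpTqTr_dense {P : Type*} [CancelMonoid P] [Countable P] (hP : IsLCMMonoid P)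
    (T : P → (lp (fun _ : Delta P => ℂ) 2 →L[ℂ] lp (fun _ : Delta P => ℂ) 2))
    (hT : IsTruncShift P T) :
    closure ((Submodule.span ℂ
        {S | ∃ p q r : P, q ∈ lIdeal P p ∩ rIdeal P r ∧
          S = (T p).comp ((ContinuousLinearMap.adjoint (T q)).comp (T r))} :
        Submodule ℂ (lp (fun _ : Delta P => ℂ) 2 →L[ℂ] lp (fun _ : Delta P => ℂ) 2)) :
        Set (lp (fun _ : Delta P => ℂ) 2 →L[ℂ] lp (fun _ : Delta P => ℂ) 2))
      = closure ((StarAlgebra.adjoin ℂ {S | ∃ p : P, S = T p} :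
          StarSubalgebra ℂ (lp (fun _ : Delta P => ℂ) 2 →L[ℂ] lp (fun _ : Delta P => ℂ) 2)) :
          Set (lp (fun _ : Delta P => ℂ) 2 →L[ℂ] lp (fun _ : Delta P => ℂ) 2)) := by
  set G : Set (lp (fun _ : Delta P => ℂ) 2 →L[ℂ] lp (fun _ : Delta P => ℂ) 2) :=
    {S | ∃ p q r : P, q ∈ lIdeal P p ∩ rIdeal P r ∧
      S = (T p).comp ((ContinuousLinearMap.adjoint (T q)).comp (T r))} with hGdef
  have hGshift : ∀ S ∈ G, ∃ t p q : P,
      (∃ s, q = s * p) ∧ (∃ r, q = r * t) ∧ ShiftsLike t p q S := by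
    rintro S ⟨p, q, r, ⟨⟨s, hs⟩, ⟨t, ht⟩⟩, rfl⟩
    exact ⟨t, p, q, ⟨s, hs⟩, ⟨r, ht⟩, generator_shiftsLike hT p q r s t hs ht⟩
  have honeG : (1 : lp (fun _ : Delta P => ℂ) 2 →L[ℂ] lp (fun _ : Delta P => ℂ) 2) ∈ G :=
    shiftsLike_mem_gen hT ⟨1, (one_mul 1).symm⟩ ⟨1, (one_mul 1).symm⟩ one_shiftsLike
  have hTG : ∀ p : P, T p ∈ G := fun p =>
    shiftsLike_mem_gen hT ⟨1, (one_mul p).symm⟩ ⟨p, (mul_one p).symm⟩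
      (truncShift_shiftsLike hT p)
  have hstarG : ∀ S ∈ G, star S ∈ G := by
    intro S hS
    obtain ⟨t, p, q, hqp, hqt, hsh⟩ := hGshift S hS
    rw [ContinuousLinearMap.star_eq_adjoint]
    exact shiftsLike_mem_gen hT hqt hqp (shiftsLike_adjoint hqp hsh)
  set M := Submodule.span ℂ G with hM
  have hmulG : ∀ S1 ∈ G, ∀ S2 ∈ G, S1 * S2 ∈ M := by
    intro S1 h1 S2 h2
    obtain ⟨t1, p1, q1, hqp1, hqt1, hs1⟩ := hGshift S1 h1
    obtain ⟨t2, p2, q2, hqp2, hqt2, hs2⟩ := hGshift S2 h2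
    rcases shiftsLike_mul hP hqp1 hqt1 hqp2 hqt2 hs1 hs2 with h0 | ⟨t, p, q, hqp, hqt, hsh⟩
    · rw [show S1 * S2 = S1.comp S2 from rfl, h0]; exact M.zero_mem
    · exact Submodule.subset_span (shiftsLike_mem_gen hT hqp hqt hsh)
  have hmulM : ∀ x y : lp (fun _ : Delta P => ℂ) 2 →L[ℂ] lp (fun _ : Delta P => ℂ) 2,
      x ∈ M → y ∈ M → x * y ∈ M := by
    intro x y hx hy
    have hle : M * M ≤ M := by
      rw [hM, Submodule.span_mul_span]
      apply Submodule.span_le.2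
      rintro z ⟨z1, hz1, z2, hz2, rfl⟩
      exact hmulG z1 hz1 z2 hz2
    exact hle (Submodule.mul_mem_mul hx hy)
  have hstarM : ∀ x ∈ M, star x ∈ M := by
    intro x hx
    induction hx using Submodule.span_induction with
    | mem y hy => exact Submodule.subset_span (hstarG y hy)
    | zero => rw [star_zero]; exact M.zero_mem
    | add y z _ _ hy hz => rw [star_add]; exact M.add_mem hy hz
    | smul c y _ hy => rw [star_smul]; exact M.smul_mem _ hy
  let A : StarSubalgebra ℂ (lp (fun _ : Delta P => ℂ) 2 →L[ℂ] lp (fun _ : Delta P => ℂ) 2) :=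
    { M.toSubalgebra (Submodule.subset_span honeG) hmulM with
      star_mem' := fun hx => hstarM _ hx }
  have hAdj : StarAlgebra.adjoin ℂ {S | ∃ p : P, S = T p} ≤ A := by
    apply StarAlgebra.adjoin_le
    rintro S ⟨p, rfl⟩
    exact Submodule.subset_span (hTG p)
  have hGA : G ⊆ (StarAlgebra.adjoin ℂ {S | ∃ p : P, S = T p} :
      StarSubalgebra ℂ (lp (fun _ : Delta P => ℂ) 2 →L[ℂ] lp (fun _ : Delta P => ℂ) 2)) := by
    rintro S ⟨p, q, r, -, rfl⟩
    have hp : T p ∈ StarAlgebra.adjoin ℂ {S | ∃ p : P, S = T p} :=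
      StarAlgebra.subset_adjoin ℂ _ ⟨p, rfl⟩
    have hq : star (T q) ∈ StarAlgebra.adjoin ℂ {S | ∃ p : P, S = T p} :=
      star_mem (StarAlgebra.subset_adjoin ℂ _ ⟨q, rfl⟩)
    have hr : T r ∈ StarAlgebra.adjoin ℂ {S | ∃ p : P, S = T p} :=
      StarAlgebra.subset_adjoin ℂ _ ⟨r, rfl⟩
    rw [ContinuousLinearMap.star_eq_adjoint] at hq
    exact mul_mem hp (mul_mem hq hr)
  have hsets : (M : Set (lp (fun _ : Delta P => ℂ) 2 →L[ℂ] lp (fun _ : Delta P => ℂ) 2))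
      = (StarAlgebra.adjoin ℂ {S | ∃ p : P, S = T p} :
        StarSubalgebra ℂ (lp (fun _ : Delta P => ℂ) 2 →L[ℂ] lp (fun _ : Delta P => ℂ) 2)) := by
    apply Set.Subset.antisymm
    · intro x hx
      induction hx using Submodule.span_induction with
      | mem y hy => exact hGA hy
      | zero => exact zero_mem _
      | add y z _ _ hy hz => exact add_mem hy hz
      | smul c y _ hy => exact SMulMemClass.smul_mem c hy
    · intro x hx
      exact hAdj hx
  rw [hsets]
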